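/- arXiv:2201.08963 — 2 statements merged into one kernel-verified Lean document; each statement's English description precedes it below -/
import Mathlib

section
/- Every vertex-coarse-graining λ : G₁ → G₂ of causal-nets factors as λ = λ_m ∘ λ_con where λ_con : G₁ → K is a contraction and λ_m : K → G₂ is a merging; this factorization is unique up to an isomorphism of K compatible with the factorizations. -/
open CategoryTheory

namespace CausalNets

/-- Acyclicity condition for raw directed-multigraph data: every directed cycle
has length zero. -/
def NoCycleData (V E : Type) (s t : E → V) : Prop :=
  letI : Quiver V := ⟨fun a b => { e : E // s e = a ∧ t e = b }⟩
  ∀ (v : V) (p : Quiver.Path v v), p.length = 0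

/-- A causal-net: a finite acyclic directed multigraph (isolated vertices and
parallel edges allowed). -/
structure CausalNet where
  V : Type
  E : Type
  src : E → V
  tgt : E → V
  fintypeV : Fintype V
  fintypeE : Fintype E
  acyclic : NoCycleData V E src tgt

attribute [instance] CausalNet.fintypeV CausalNet.fintypeE

instance CausalNet.quiver (G : CausalNet) : Quiver G.V :=
  ⟨fun a b => { e : G.E // G.src e = a ∧ G.tgt e = b }⟩

/-- The category `Cau` of causal-nets: a morphism `G ⟶ H` is a functor between
the path categories `Paths G.V ⥤ Paths H.V`. -/
instance : Category CausalNet where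
  Hom G H := Paths G.V ⥤ Paths H.V
  id G := 𝟭 (Paths G.V)
  comp φ ψ := φ ⋙ ψ

variable {G H K : CausalNet}

/-- The action of a morphism of causal-nets on vertices (objects). -/
def vmap (φ : G ⟶ H) : G.V → H.V := (φ : Paths G.V ⥤ Paths H.V).obj

/-- The action of a morphism of causal-nets on directed paths (morphisms). -/
def pmap (φ : G ⟶ H) {a b : G.V} (p : Quiver.Path a b) :
    Quiver.Path (vmap φ a) (vmap φ b) :=
  (φ : Paths G.V ⥤ Paths H.V).map p

/-- The quiver arrow corresponding to an edge. -/
def edgeHom (G : CausalNet) (e : G.E) : G.src e ⟶ G.tgt e := ⟨e, rfl, rfl⟩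

/-- The directed path which is the image of the edge `e` under the morphism `φ`. -/
def edgePath (φ : G ⟶ H) (e : G.E) :
    Quiver.Path (vmap φ (G.src e)) (vmap φ (G.tgt e)) :=
  pmap φ (Quiver.Hom.toPath (edgeHom G e))

/-- The underlying edge of a quiver arrow. -/
def homEdge {a b : G.V} (f : a ⟶ b) : G.E := Subtype.val f

/-- The list of edges traversed by a directed path. -/
def pathEdges : {a b : G.V} → Quiver.Path a b → List G.E
  | _, _, Quiver.Path.nil => []
  | _, _, Quiver.Path.cons p f => pathEdges p ++ [homEdge f]

/-- The list of vertices visited by a directed path (including endpoints). -/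
def pathVertices : {a b : G.V} → Quiver.Path a b → List G.V
  | a, _, Quiver.Path.nil => [a]
  | _, b, Quiver.Path.cons p _ => pathVertices p ++ [b]

/-- An edge `e` is a contraction of `φ` if `φ(e)` has length `0`. -/
def IsContractionEdge (φ : G ⟶ H) (e : G.E) : Prop := (edgePath φ e).length = 0

/-- An edge `e` is a segment of `φ` if `φ(e)` has length `1`. -/
def IsSegmentEdge (φ : G ⟶ H) (e : G.E) : Prop := (edgePath φ e).length = 1

/-- An edge `e` is a subdivision of `φ` if `φ(e)` has length at least `2`. -/
def IsSubdivisionEdge (φ : G ⟶ H) (e : G.E) : Prop := 2 ≤ (edgePath φ e).length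

/-- `φ` maps the edge `e` to the length-one path consisting of the edge `h`. -/
def MapsToEdge (φ : G ⟶ H) (e : G.E) (h : H.E) : Prop :=
  pathEdges (edgePath φ e) = [h]

/-- A quotient: a morphism with no null-vertex and no null-edge. -/
def IsQuotientMor (φ : G ⟶ H) : Prop :=
  (∀ v : H.V, ∃ w : G.V, vmap φ w = v) ∧ ∀ h : H.E, ∃ e : G.E, MapsToEdge φ e h

/-- A coarse-graining: a quotient with no subdivision. -/
def IsCoarseGraining (φ : G ⟶ H) : Prop :=
  IsQuotientMor φ ∧ ∀ e : G.E, ¬ IsSubdivisionEdge φ e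

/-- A vertex-coarse-graining: a coarse-graining with no multiple-edge. -/
def IsVertexCoarseGraining (φ : G ⟶ H) : Prop :=
  IsCoarseGraining φ ∧
  ∀ (h : H.E) (e₁ e₂ : G.E), MapsToEdge φ e₁ h → MapsToEdge φ e₂ h → e₁ = e₂

/-- An edge-coarse-graining: a coarse-graining with no multiple-vertex and no
contraction. -/
def IsEdgeCoarseGraining (φ : G ⟶ H) : Prop :=
  IsCoarseGraining φ ∧ Function.Injective (vmap φ) ∧ ∀ e : G.E, ¬ IsContractionEdge φ e

/-- A merging: a vertex-coarse-graining with no contraction. -/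
def IsMerging (φ : G ⟶ H) : Prop :=
  IsVertexCoarseGraining φ ∧ ∀ e : G.E, ¬ IsContractionEdge φ e

/-- A fusion: a coarse-graining with no contraction. -/
def IsFusion (φ : G ⟶ H) : Prop :=
  IsCoarseGraining φ ∧ ∀ e : G.E, ¬ IsContractionEdge φ e

/-- An inclusion: a morphism injective on vertices and on directed paths
(an injective-on-objects faithful functor). -/
def IsInclusion (φ : G ⟶ H) : Prop :=
  Function.Injective (vmap φ) ∧
  ∀ (a b : G.V) (p q : Quiver.Path a b), pmap φ p = pmap φ q → p = q

/-- An embedding: an inclusion with no subdivision. -/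
def IsEmbedding (φ : G ⟶ H) : Prop :=
  IsInclusion φ ∧ ∀ e : G.E, ¬ IsSubdivisionEdge φ e

/-- An immersion: an inclusion such that images of distinct subdivision edges
share no edge. -/
def IsImmersion (φ : G ⟶ H) : Prop :=
  IsInclusion φ ∧
  ∀ e₁ e₂ : G.E, e₁ ≠ e₂ → IsSubdivisionEdge φ e₁ → IsSubdivisionEdge φ e₂ →
    ∀ h : H.E, h ∈ pathEdges (edgePath φ e₁) → h ∉ pathEdges (edgePath φ e₂)

/-- The internal vertices of a directed path (all visited vertices except the
two endpoints). -/
def internalVertices {a b : G.V} (p : Quiver.Path a b) : List G.V :=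
  ((pathVertices p).dropLast).tail

/-- A strong morphism: all internal vertices of images of subdivision edges are
null-vertices. -/
def IsStrong (φ : G ⟶ H) : Prop :=
  ∀ e : G.E, IsSubdivisionEdge φ e →
    ∀ v ∈ internalVertices (edgePath φ e), ∀ w : G.V, vmap φ w ≠ v

/-- A vertex-disjoint morphism: images of distinct subdivision edges share no
internal vertex. -/
def IsVertexDisjoint (φ : G ⟶ H) : Prop :=
  ∀ e₁ e₂ : G.E, e₁ ≠ e₂ → IsSubdivisionEdge φ e₁ → IsSubdivisionEdge φ e₂ →
    ∀ v : H.V, v ∈ internalVertices (edgePath φ e₁) → v ∉ internalVertices (edgePath φ e₂)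

/-- A topological embedding: a strong vertex-disjoint inclusion. -/
def IsTopologicalEmbedding (φ : G ⟶ H) : Prop :=
  IsInclusion φ ∧ IsStrong φ ∧ IsVertexDisjoint φ

/-- The edge `e` covers the vertex `v` if `v` occurs on the path `φ(e)`. -/
def Covers (φ : G ⟶ H) (e : G.E) (v : H.V) : Prop :=
  v ∈ pathVertices (edgePath φ e)

/-- An isolated vertex: a vertex incident to no edge. -/
def IsolatedVertex (G : CausalNet) (v : G.V) : Prop :=
  ∀ e : G.E, G.src e ≠ v ∧ G.tgt e ≠ v

/-- A subdivision morphism: a topological embedding such that every non-isolated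
vertex of the codomain is covered and every isolated vertex of the codomain is a
simple-vertex. -/
def IsSubdivisionMor (φ : G ⟶ H) : Prop :=
  IsTopologicalEmbedding φ ∧
  (∀ v : H.V, ¬ IsolatedVertex H v → ∃ e : G.E, Covers φ e v) ∧
  (∀ v : H.V, IsolatedVertex H v → ∃! w : G.V, vmap φ w = v)

theorem mapPath_length {V W : Type} [Quiver V] [Quiver W] (F : V ⥤q W) :
    ∀ {a b : V} (p : Quiver.Path a b), (F.mapPath p).length = p.length := by
  intro a b p
  induction p with
  | nil => rfl
  | cons q f ih =>
      show ((F.mapPath q).cons (F.map f)).length = (q.cons f).length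
      rw [Quiver.Path.length_cons, Quiver.Path.length_cons, ih]

theorem noCycleData_of_map {V₁ E₁ : Type} (s₁ t₁ : E₁ → V₁) (G : CausalNet)
    (f : V₁ → G.V) (g : E₁ → G.E)
    (hs : ∀ e, G.src (g e) = f (s₁ e)) (ht : ∀ e, G.tgt (g e) = f (t₁ e)) :
    NoCycleData V₁ E₁ s₁ t₁ := by
  letI : Quiver V₁ := ⟨fun a b => { e : E₁ // s₁ e = a ∧ t₁ e = b }⟩
  intro v p
  let F : V₁ ⥤q G.V :=
    { obj := f
      map := fun {a b} e =>
        ⟨g (Subtype.val e), by rw [hs, (Subtype.prop e).1], by rw [ht, (Subtype.prop e).2]⟩ }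
  have h := G.acyclic (f v) (F.mapPath p)
  rw [mapPath_length] at h
  exact h

theorem noCycleData_of_lt {V E : Type} [Preorder V] (s t : E → V)
    (hlt : ∀ e, s e < t e) : NoCycleData V E s t := by
  letI : Quiver V := ⟨fun a b => { e : E // s e = a ∧ t e = b }⟩
  have key : ∀ {a b : V} (p : Quiver.Path a b), (a = b ∧ p.length = 0) ∨ a < b := by
    intro a b p
    induction p with
    | nil => exact Or.inl ⟨rfl, rfl⟩
    | cons q f ih =>
        have hcb := hlt (Subtype.val f)
        rw [(Subtype.prop f).1, (Subtype.prop f).2] at hcb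
        rcases ih with ⟨h, _⟩ | h
        · exact Or.inr (by rw [h]; exact hcb)
        · exact Or.inr (lt_trans h hcb)
  intro v p
  rcases key p with ⟨_, h⟩ | h
  · exact h
  · exact absurd h (lt_irrefl v)

/-- The sub-causal-net spanned by a set of vertices and a set of edges. -/
noncomputable def mkSub (G : CausalNet) (Vs : Set G.V) (Es : Set G.E)
    (hs : ∀ e ∈ Es, G.src e ∈ Vs) (ht : ∀ e ∈ Es, G.tgt e ∈ Vs) : CausalNet where
  V := Vs
  E := Es
  src e := ⟨G.src e.1, hs e.1 e.2⟩
  tgt e := ⟨G.tgt e.1, ht e.1 e.2⟩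
  fintypeV := Fintype.ofFinite _
  fintypeE := Fintype.ofFinite _
  acyclic := noCycleData_of_map _ _ G Subtype.val Subtype.val (fun _ => rfl) (fun _ => rfl)

/-- The fiber of a morphism at a vertex `v` of the codomain: the sub-causal-net
of the domain on the vertices mapped to `v` and the edges mapped to the identity
path at `v`. -/
noncomputable def fiber (φ : G ⟶ H) (v : H.V) : CausalNet :=
  mkSub G {w : G.V | vmap φ w = v}
    {e : G.E | IsContractionEdge φ e ∧ vmap φ (G.src e) = v}
    (fun _ he => he.2)
    (fun e he =>
      show vmap φ (G.tgt e) = v from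
        Quiver.Path.eq_of_length_zero (edgePath φ e) he.1 ▸ he.2)

/-- The underlying undirected (simple) graph of a causal-net. -/
def undirected (G : CausalNet) : SimpleGraph G.V where
  Adj v w := v ≠ w ∧ ∃ e : G.E, (G.src e = v ∧ G.tgt e = w) ∨ (G.src e = w ∧ G.tgt e = v)
  symm := by
    refine ⟨?_⟩
    rintro v w ⟨hne, e, he⟩
    exact ⟨hne.symm, e, he.symm⟩
  loopless := by
    refine ⟨?_⟩
    intro v h
    exact h.1 rfl

/-- A causal-net is connected if its underlying undirected graph is connected. -/
def Connected (G : CausalNet) : Prop := (undirected G).Connected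

/-- A causal-Tree: a causal-net whose simplification has a tree as underlying
undirected graph.  (Since a causal-net is acyclic, the underlying undirected
graph of its simplification is exactly `undirected G`.) -/
def IsCausalTree (G : CausalNet) : Prop := (undirected G).IsTree

/-- A contraction: a vertex-coarse-graining all of whose fibers are connected. -/
def IsContractionMor (φ : G ⟶ H) : Prop :=
  IsVertexCoarseGraining φ ∧ ∀ v : H.V, Connected (fiber φ v)

/-- A simple contraction: a contraction with exactly one non-trivial fiber, that
fiber consisting of two vertices together with all edges from the first to the
second. -/
def IsSimpleContraction (φ : G ⟶ H) : Prop :=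
  IsContractionMor φ ∧
  ∃ w₁ w₂ : G.V, w₁ ≠ w₂ ∧ vmap φ w₁ = vmap φ w₂ ∧
    (∃ e : G.E, G.src e = w₁ ∧ G.tgt e = w₂) ∧
    (∀ e : G.E, IsContractionEdge φ e ↔ (G.src e = w₁ ∧ G.tgt e = w₂)) ∧
    (∀ u u' : G.V, vmap φ u = vmap φ u' →
      u = u' ∨ ((u = w₁ ∨ u = w₂) ∧ (u' = w₁ ∨ u' = w₂)))

/-- A tree-contraction: a contraction all of whose fibers are causal-Trees. -/
def IsTreeContraction (φ : G ⟶ H) : Prop :=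
  IsContractionMor φ ∧ ∀ v : H.V, IsCausalTree (fiber φ v)

/-- A directed multi-path: a causal-net whose simplification is a directed path. -/
def IsDirectedMultiPath (K : CausalNet) : Prop :=
  ∃ (a b : K.V) (p : Quiver.Path a b),
    (pathVertices p).Nodup ∧ (∀ v : K.V, v ∈ pathVertices p) ∧
    ∀ e : K.E, ∃ h ∈ pathEdges p, K.src e = K.src h ∧ K.tgt e = K.tgt h

/-- A path-contraction: a vertex-coarse-graining all of whose fibers are
directed multi-paths. -/
def IsPathContraction (φ : G ⟶ H) : Prop :=
  IsVertexCoarseGraining φ ∧ ∀ v : H.V, IsDirectedMultiPath (fiber φ v)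

/-- A point: a causal-net with exactly one vertex and no edges. -/
def IsPoint (A : CausalNet) : Prop := (∃ v : A.V, ∀ w : A.V, w = v) ∧ IsEmpty A.E

/-- Reachability: there is a directed path from `a` to `b`. -/
def Reaches (G : CausalNet) (a b : G.V) : Prop := Nonempty (Quiver.Path a b)

/-- A coclique: a set of vertices no two distinct members of which are
comparable under the reachability order. -/
def IsCoclique (G : CausalNet) (S : Set G.V) : Prop :=
  ∀ a ∈ S, ∀ b ∈ S, a ≠ b → ¬ Reaches G a b

/-- A multi-edge: the nonempty set of all edges from one fixed vertex to another. -/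
def IsMultiEdge (G : CausalNet) (s : Set G.E) : Prop :=
  s.Nonempty ∧ ∃ a b : G.V, s = {e : G.E | G.src e = a ∧ G.tgt e = b}

/-- The pair of vertices whose multi-edge is contracted by a simple contraction. -/
def ContractedPair (φ : G ⟶ H) (w₁ w₂ : G.V) : Prop :=
  w₁ ≠ w₂ ∧ vmap φ w₁ = vmap φ w₂ ∧ (∃ e : G.E, G.src e = w₁ ∧ G.tgt e = w₂) ∧
  ∀ e : G.E, IsContractionEdge φ e ↔ (G.src e = w₁ ∧ G.tgt e = w₂)

/-- Two causal-nets are isomorphic in `Cau`. -/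
def IsIsomorphicTo (A B : CausalNet) : Prop := ∃ φ : A ⟶ B, IsIso φ

/-- A simple causal-net: at most one edge between any ordered pair of vertices. -/
def IsSimpleNet (G : CausalNet) : Prop :=
  ∀ e₁ e₂ : G.E, G.src e₁ = G.src e₂ → G.tgt e₁ = G.tgt e₂ → e₁ = e₂

/-- A harmonic causal-net: every fusion out of it is an isomorphism. -/
def Harmonic (G : CausalNet) : Prop :=
  ∀ (H : CausalNet) (φ : G ⟶ H), IsFusion φ → IsIso φ

/-- A hamiltonian path: a directed path visiting every vertex exactly once. -/
def HasHamiltonianPath (G : CausalNet) : Prop :=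
  ∃ (a b : G.V) (p : Quiver.Path a b),
    (pathVertices p).Nodup ∧ ∀ v : G.V, v ∈ pathVertices p

/-- Morphisms which can be written as a composition of finitely many morphisms
each satisfying `P`. -/
inductive IsCompOf (P : ∀ ⦃A B : CausalNet⦄, (A ⟶ B) → Prop) :
    ∀ {A B : CausalNet}, (A ⟶ B) → Prop
  | of {A B : CausalNet} (φ : A ⟶ B) : P φ → IsCompOf P φ
  | comp {A B C : CausalNet} (φ : A ⟶ B) (ψ : B ⟶ C) :
      IsCompOf P φ → IsCompOf P ψ → IsCompOf P (φ ≫ ψ)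

section Helpers

theorem pathEdges_nil {a : G.V} : pathEdges (Quiver.Path.nil : Quiver.Path a a) = [] := by
  simp [pathEdges]

theorem pathEdges_cons {a b c : G.V} (p : Quiver.Path a b) (f : b ⟶ c) :
    pathEdges (p.cons f) = pathEdges p ++ [homEdge f] := by
  simp [pathEdges]

theorem pathEdges_length {a b : G.V} (p : Quiver.Path a b) :
    (pathEdges p).length = p.length := by
  induction p with
  | nil => simp [pathEdges_nil]
  | cons q f ih => simp [pathEdges_cons, Quiver.Path.length_cons, ih]

theorem pathEdges_comp {a b c : G.V} (p : Quiver.Path a b) (q : Quiver.Path b c) :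
    pathEdges (p.comp q) = pathEdges p ++ pathEdges q := by
  induction q with
  | nil => simp [pathEdges_nil]
  | cons q' f ih =>
      show pathEdges ((p.comp q').cons f) = _
      simp [pathEdges_cons, ih]

theorem path_heq_of_pathEdges {a b : G.V} (p : Quiver.Path a b) :
    ∀ {c : G.V} (q : Quiver.Path a c), pathEdges p = pathEdges q → b = c ∧ HEq p q := by
  induction p with
  | nil =>
      intro c q h
      cases q with
      | nil => exact ⟨rfl, HEq.rfl⟩
      | cons q' g => simp [pathEdges_nil, pathEdges_cons] at h
  | cons p' f ih =>
      intro c q h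
      cases q with
      | nil => simp [pathEdges_nil, pathEdges_cons] at h
      | cons q' g =>
          rw [pathEdges_cons, pathEdges_cons] at h
          obtain ⟨h1, h2⟩ := List.append_inj' h rfl
          obtain ⟨hmid, hpq⟩ := ih q' h1
          subst hmid
          have hval : homEdge f = homEdge g := by simpa using h2
          have hbc := (f.2.2).symm.trans ((congrArg G.tgt hval).trans g.2.2)
          subst hbc
          have hfg : f = g := Subtype.ext hval
          subst hfg
          rw [eq_of_heq hpq]
          exact ⟨rfl, HEq.rfl⟩

theorem path_eq_of_pathEdges {a b : G.V} (p q : Quiver.Path a b)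
    (h : pathEdges p = pathEdges q) : p = q :=
  eq_of_heq (path_heq_of_pathEdges p q h).2

theorem exists_of_length_one {a b : G.V} (p : Quiver.Path a b) (h : p.length = 1) :
    ∃ f : a ⟶ b, p = f.toPath := by
  cases p with
  | nil => simp at h
  | cons q f =>
      have hq : q.length = 0 := by simpa [Quiver.Path.length_cons] using h
      cases q with
      | nil => exact ⟨f, rfl⟩
      | cons q' g => simp [Quiver.Path.length_cons] at hq

theorem pathEdges_toPath {a b : G.V} (f : a ⟶ b) :
    pathEdges f.toPath = [homEdge f] := by
  simp [Quiver.Hom.toPath, pathEdges_cons, pathEdges_nil]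

theorem pathEdges_eq_nil_of_length_zero {a b : G.V} (p : Quiver.Path a b)
    (h : p.length = 0) : pathEdges p = [] := by
  rw [← List.length_eq_zero_iff, pathEdges_length]; exact h

theorem exists_mapsToEdge {φ : G ⟶ H} {e : G.E} (h1 : ¬ IsContractionEdge φ e)
    (h2 : ¬ IsSubdivisionEdge φ e) : ∃ h : H.E, MapsToEdge φ e h := by
  have hlen : (edgePath φ e).length = 1 := by
    unfold IsContractionEdge at h1
    unfold IsSubdivisionEdge at h2
    omega
  obtain ⟨f, hf⟩ := exists_of_length_one _ hlen
  exact ⟨homEdge f, by rw [MapsToEdge, hf, pathEdges_toPath]⟩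

theorem mapsToEdge_props {φ : G ⟶ H} {e : G.E} {h : H.E} (hm : MapsToEdge φ e h) :
    H.src h = vmap φ (G.src e) ∧ H.tgt h = vmap φ (G.tgt e) ∧
      (edgePath φ e).length = 1 := by
  have hlen : (edgePath φ e).length = 1 := by
    rw [← pathEdges_length, hm]; rfl
  obtain ⟨f, hf⟩ := exists_of_length_one _ hlen
  rw [MapsToEdge, hf, pathEdges_toPath] at hm
  have hfe : homEdge f = h := by simpa using hm
  refine ⟨?_, ?_, hlen⟩
  · rw [← hfe]; exact f.2.1
  · rw [← hfe]; exact f.2.2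

theorem mapsToEdge_unique {φ : G ⟶ H} {e : G.E} {h h' : H.E}
    (hm : MapsToEdge φ e h) (hm' : MapsToEdge φ e h') : h = h' := by
  rw [MapsToEdge] at hm hm'
  rw [hm] at hm'
  simpa using hm'

theorem map_toPath_eq_edgePath (φ : G ⟶ H) {a b : G.V} (f : a ⟶ b) :
    pathEdges ((φ : Paths G.V ⥤ Paths H.V).map f.toPath) =
      pathEdges (edgePath φ (homEdge f)) := by
  obtain ⟨e, h1, h2⟩ := f
  subst h1; subst h2
  rfl

theorem pathEdges_pmap (φ : G ⟶ H) {a b : G.V} (p : Quiver.Path a b) :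
    pathEdges (pmap φ p) = (pathEdges p).flatMap (fun e => pathEdges (edgePath φ e)) := by
  induction p with
  | nil =>
      have hnil : pmap φ (Quiver.Path.nil : Quiver.Path a a) = Quiver.Path.nil :=
        (φ : Paths G.V ⥤ Paths H.V).map_id a
      rw [hnil, pathEdges_nil, pathEdges_nil]
      rfl
  | cons q f ih =>
      have hcomp : (q.cons f) = q.comp f.toPath := rfl
      have hstep : pmap φ (q.cons f) =
          (pmap φ q).comp ((φ : Paths G.V ⥤ Paths H.V).map f.toPath) := by
        rw [pmap, hcomp]
        exact (φ : Paths G.V ⥤ Paths H.V).map_comp q f.toPath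
      erw [hstep, pathEdges_comp]
      erw [ih, map_toPath_eq_edgePath, pathEdges_cons]
      simp

theorem vmap_comp' (φ : G ⟶ H) (ψ : H ⟶ K) (a : G.V) :
    vmap (φ ≫ ψ) a = vmap ψ (vmap φ a) := rfl

theorem edgePath_comp' (φ : G ⟶ H) (ψ : H ⟶ K) (e : G.E) :
    edgePath (φ ≫ ψ) e = pmap ψ (edgePath φ e) := rfl

theorem path_heq_of_pathEdges' {a a' b c : G.V} (h : a = a') (p : Quiver.Path a b)
    (q : Quiver.Path a' c) (he : pathEdges p = pathEdges q) : HEq p q := by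
  subst h
  exact (path_heq_of_pathEdges p q he).2

theorem hom_ext {F F' : G ⟶ H} (hobj : ∀ a, vmap F a = vmap F' a)
    (hedge : ∀ e : G.E, pathEdges (edgePath F e) = pathEdges (edgePath F' e)) : F = F' := by
  have hmapall : ∀ {a b : G.V} (p : Quiver.Path a b),
      pathEdges (pmap F p) = pathEdges (pmap F' p) := by
    intro a b p
    rw [pathEdges_pmap, pathEdges_pmap]
    exact List.flatMap_congr (fun e _ => hedge e)
  refine CategoryTheory.Functor.ext hobj (fun a b p => ?_)
  rw [CategoryTheory.conj_eqToHom_iff_heq (C := Paths H.V)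
    ((F : Paths G.V ⥤ Paths H.V).map p) ((F' : Paths G.V ⥤ Paths H.V).map p)
    (hobj a) (hobj b)]
  exact path_heq_of_pathEdges' (hobj a) _ _ (hmapall p)

theorem lift_edgePath (Φ : G.V ⥤q Paths H.V) (e : G.E) :
    edgePath (CategoryTheory.Paths.lift Φ : G ⟶ H) e = Φ.map (edgeHom G e) :=
  CategoryTheory.Paths.lift_toPath Φ (edgeHom G e)

end Helpers
section MkHom

variable {K K' : CausalNet}

/-- Build a morphism of causal-nets from a graph morphism (all edges to segments). -/
noncomputable def mkHom (φV : K.V → K'.V) (φE : K.E → K'.E)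
    (hs : ∀ h, K'.src (φE h) = φV (K.src h)) (ht : ∀ h, K'.tgt (φE h) = φV (K.tgt h)) :
    K ⟶ K' :=
  CategoryTheory.Paths.lift
    { obj := φV
      map := fun {a b} f =>
        Quiver.Hom.toPath
          (⟨φE (homEdge f), (hs _).trans (congrArg φV f.2.1),
            (ht _).trans (congrArg φV f.2.2)⟩ : φV a ⟶ φV b) }

theorem mkHom_vmap (φV : K.V → K'.V) (φE : K.E → K'.E) (hs ht) (a : K.V) :
    vmap (mkHom φV φE hs ht) a = φV a := rfl

theorem mkHom_edge (φV : K.V → K'.V) (φE : K.E → K'.E) (hs ht) (e : K.E) :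
    pathEdges (edgePath (mkHom φV φE hs ht) e) = [φE e] := by
  unfold mkHom
  erw [lift_edgePath, pathEdges_toPath]
  rfl

theorem mkHom_mapsToEdge (φV : K.V → K'.V) (φE : K.E → K'.E) (hs ht) (e : K.E) :
    MapsToEdge (mkHom φV φE hs ht) e (φE e) := mkHom_edge φV φE hs ht e

theorem id_vmap (a : K.V) : vmap (𝟙 K) a = a := rfl

theorem id_edge (e : K.E) : pathEdges (edgePath (𝟙 K) e) = [e] := by
  have h : edgePath (𝟙 K) e = Quiver.Hom.toPath (edgeHom K e) := rfl
  erw [h, pathEdges_toPath]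
  rfl

theorem pathEdges_eqToHom {x y : K.V} (h : x = y) :
    pathEdges (CategoryTheory.eqToHom (C := Paths K.V) (X := x) (Y := y) h) = [] := by
  subst h
  exact pathEdges_nil

end MkHom

section Existence

variable {G₁ G₂ : CausalNet} (lam : G₁ ⟶ G₂)

/-- two vertices joined by a contraction edge -/
def conRel (a b : G₁.V) : Prop :=
  ∃ e : G₁.E, IsContractionEdge lam e ∧ G₁.src e = a ∧ G₁.tgt e = b

theorem vmap_eq_of_contraction {e : G₁.E} (h : IsContractionEdge lam e) :
    vmap lam (G₁.src e) = vmap lam (G₁.tgt e) :=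
  Quiver.Path.eq_of_length_zero (edgePath lam e) h

theorem vmap_eq_of_eqvGen {a b : G₁.V} (h : Relation.EqvGen (conRel lam) a b) :
    vmap lam a = vmap lam b := by
  induction h with
  | rel x y hr => obtain ⟨e, hc, rfl, rfl⟩ := hr; exact vmap_eq_of_contraction lam hc
  | refl x => rfl
  | symm x y _ ih => exact ih.symm
  | trans x y z _ _ ih1 ih2 => exact ih1.trans ih2

/-- the setoid identifying endpoints of contraction edges -/
def conSetoid : Setoid G₁.V := Relation.EqvGen.setoid (conRel lam)

variable (hlam : IsVertexCoarseGraining lam)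

attribute [local instance] Classical.propDecidable

/-- the edge of `G₂` that a segment edge maps to -/
noncomputable def segEdge (e : G₁.E) (he : ¬ IsContractionEdge lam e) : G₂.E :=
  (exists_mapsToEdge he (hlam.1.2 e)).choose

theorem segEdge_spec (e : G₁.E) (he : ¬ IsContractionEdge lam e) :
    MapsToEdge lam e (segEdge lam hlam e he) :=
  (exists_mapsToEdge he (hlam.1.2 e)).choose_spec

/-- the intermediate causal-net of the factorization -/
noncomputable def Kc : CausalNet where
  V := Quotient (conSetoid lam)
  E := {e : G₁.E // ¬ IsContractionEdge lam e}
  src e := Quotient.mk _ (G₁.src e.1)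
  tgt e := Quotient.mk _ (G₁.tgt e.1)
  fintypeV := Fintype.ofFinite _
  fintypeE := Fintype.ofFinite _
  acyclic := by
    refine noCycleData_of_map _ _ G₂
      (Quotient.lift (vmap lam) (fun a b h => vmap_eq_of_eqvGen lam h))
      (fun e => segEdge lam hlam e.1 e.2) (fun e => ?_) (fun e => ?_)
    · exact (mapsToEdge_props (segEdge_spec lam hlam e.1 e.2)).1
    · exact (mapsToEdge_props (segEdge_spec lam hlam e.1 e.2)).2.1

/-- the class of a vertex in the intermediate net -/
def KcMk (a : G₁.V) : (Kc lam hlam).V := Quotient.mk _ a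

/-- the contraction part of the factorization -/
noncomputable def lconMor : G₁ ⟶ Kc lam hlam :=
  CategoryTheory.Paths.lift
    { obj := fun a => KcMk lam hlam a
      map := fun {a b} f =>
        if hc : IsContractionEdge lam (homEdge f) then
          CategoryTheory.eqToHom
            (show KcMk lam hlam a = KcMk lam hlam b from
              Quotient.sound (Relation.EqvGen.rel _ _ ⟨homEdge f, hc, f.2.1, f.2.2⟩))
        else
          Quiver.Hom.toPath
            (⟨(⟨homEdge f, hc⟩ : (Kc lam hlam).E),
              congrArg (Quotient.mk _) f.2.1, congrArg (Quotient.mk _) f.2.2⟩ :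
              KcMk lam hlam a ⟶ KcMk lam hlam b) }

theorem lcon_vmap (a : G₁.V) :
    vmap (lconMor lam hlam) a = KcMk lam hlam a := rfl

theorem lcon_edge_con {e : G₁.E} (hc : IsContractionEdge lam e) :
    pathEdges (edgePath (lconMor lam hlam) e) = [] := by
  unfold lconMor
  rw [lift_edgePath]
  show pathEdges (dite _ _ _) = []
  erw [dif_pos (show IsContractionEdge lam (homEdge (edgeHom G₁ e)) from hc)]
  exact pathEdges_eqToHom _

theorem lcon_edge_seg {e : G₁.E} (hc : ¬ IsContractionEdge lam e) :
    pathEdges (edgePath (lconMor lam hlam) e) = [(⟨e, hc⟩ : (Kc lam hlam).E)] := by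
  unfold lconMor
  rw [lift_edgePath]
  show pathEdges (dite _ _ _) = _
  erw [dif_neg (show ¬ IsContractionEdge lam (homEdge (edgeHom G₁ e)) from hc), pathEdges_toPath]
  rfl

/-- the merging part of the factorization -/
noncomputable def lmMor : Kc lam hlam ⟶ G₂ :=
  mkHom (Quotient.lift (vmap lam) (fun a b h => vmap_eq_of_eqvGen lam h))
    (fun e => segEdge lam hlam e.1 e.2)
    (fun e => (mapsToEdge_props (segEdge_spec lam hlam e.1 e.2)).1)
    (fun e => (mapsToEdge_props (segEdge_spec lam hlam e.1 e.2)).2.1)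

theorem lcon_contractionEdge_iff (e : G₁.E) :
    IsContractionEdge (lconMor lam hlam) e ↔ IsContractionEdge lam e := by
  unfold IsContractionEdge
  rw [← pathEdges_length]
  by_cases hc : IsContractionEdge lam e
  · rw [lcon_edge_con lam hlam hc]; simpa [IsContractionEdge] using hc
  · rw [lcon_edge_seg lam hlam hc]
    change 1 = 0 ↔ _
    exact iff_of_false (by omega) hc

theorem lcon_fac : lconMor lam hlam ≫ lmMor lam hlam = lam := by
  apply hom_ext
  · intro a; rfl
  · intro e
    erw [edgePath_comp', pathEdges_pmap, lconMor]
    by_cases hc : IsContractionEdge lam e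
    · rw [show pathEdges (edgePath (CategoryTheory.Paths.lift _) e) = [] from
        lcon_edge_con lam hlam hc]
      rw [pathEdges_eq_nil_of_length_zero _ hc]
      rfl
    · rw [show pathEdges (edgePath (CategoryTheory.Paths.lift _) e) = _ from
        lcon_edge_seg lam hlam hc]
      rw [(segEdge_spec lam hlam e hc : _ = _)]
      erw [List.flatMap_cons, List.flatMap_nil, List.append_nil]
      exact mkHom_edge _ _ _ _ _

theorem lcon_isVCG : IsVertexCoarseGraining (lconMor lam hlam) := by
  refine ⟨⟨⟨?_, ?_⟩, ?_⟩, ?_⟩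
  · intro v
    obtain ⟨a, rfl⟩ := Quotient.exists_rep v
    exact ⟨a, rfl⟩
  · intro h
    exact ⟨h.1, by rw [MapsToEdge, lcon_edge_seg lam hlam h.2]; rfl⟩
  · intro e hs
    rw [IsSubdivisionEdge, ← pathEdges_length] at hs
    by_cases hc : IsContractionEdge lam e
    · rw [lcon_edge_con lam hlam hc] at hs; simp at hs
    · rw [lcon_edge_seg lam hlam hc] at hs; change 2 ≤ 1 at hs; omega
  · intro h e₁ e₂ hm1 hm2
    rw [MapsToEdge] at hm1 hm2
    by_cases hc1 : IsContractionEdge lam e₁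
    · rw [lcon_edge_con lam hlam hc1] at hm1; simp at hm1
    by_cases hc2 : IsContractionEdge lam e₂
    · rw [lcon_edge_con lam hlam hc2] at hm2; simp at hm2
    rw [lcon_edge_seg lam hlam hc1] at hm1
    rw [lcon_edge_seg lam hlam hc2] at hm2
    have h1 : (⟨e₁, hc1⟩ : (Kc lam hlam).E) = h := List.head_eq_of_cons_eq hm1
    have h2 : (⟨e₂, hc2⟩ : (Kc lam hlam).E) = h := List.head_eq_of_cons_eq hm2
    have := h1.trans h2.symm
    exact congrArg Subtype.val this

theorem lcon_isContraction : IsContractionMor (lconMor lam hlam) := by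
  refine ⟨lcon_isVCG lam hlam, ?_⟩
  intro v
  obtain ⟨a, rfl⟩ := Quotient.exists_rep v
  show (undirected (fiber (lconMor lam hlam) (Quotient.mk (conSetoid lam) a))).Connected
  have key : ∀ w w', Relation.EqvGen (conRel lam) w w' →
      ∀ (hw : vmap (lconMor lam hlam) w = Quotient.mk (conSetoid lam) a)
        (hw' : vmap (lconMor lam hlam) w' = Quotient.mk (conSetoid lam) a),
      (undirected (fiber (lconMor lam hlam) (Quotient.mk (conSetoid lam) a))).Reachable
        ⟨w, hw⟩ ⟨w', hw'⟩ := by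
    intro w w' hww
    induction hww with
    | rel x y hr =>
        intro hw hw'
        obtain ⟨e, hc, rfl, rfl⟩ := hr
        by_cases hxy : (⟨G₁.src e, hw⟩ :
            {w : G₁.V | vmap (lconMor lam hlam) w = Quotient.mk (conSetoid lam) a}) =
            ⟨G₁.tgt e, hw'⟩
        · rw [hxy]; exact SimpleGraph.Reachable.refl _
        · apply SimpleGraph.Adj.reachable
          refine ⟨hxy, ⟨e, ?_⟩, Or.inl ⟨?_, ?_⟩⟩
          · exact ⟨(lcon_contractionEdge_iff lam hlam e).mpr hc, hw⟩
          · exact Subtype.ext rfl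
          · exact Subtype.ext rfl
    | refl x => intro hw hw'; exact SimpleGraph.Reachable.refl _
    | symm x y hxy ih =>
        intro hw hw'
        exact (ih hw' hw).symm
    | trans x y z hxy hyz ih1 ih2 =>
        intro hw hw'
        have hy : vmap (lconMor lam hlam) y = Quotient.mk (conSetoid lam) a :=
          (Quotient.sound hxy).symm.trans hw
        exact (ih1 hw hy).trans (ih2 hy hw')
  refine { nonempty := ⟨⟨a, rfl⟩⟩, preconnected := fun w w' => ?_ }
  obtain ⟨wv, hw⟩ := w
  obtain ⟨wv', hw'⟩ := w'
  exact key wv wv' (Quotient.exact (hw.trans hw'.symm)) hw hw'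

theorem lm_isMerging : IsMerging (lmMor lam hlam) := by
  have hlen : ∀ h : (Kc lam hlam).E, pathEdges (edgePath (lmMor lam hlam) h) =
      [segEdge lam hlam h.1 h.2] := fun h => mkHom_edge _ _ _ _ h
  refine ⟨⟨⟨⟨?_, ?_⟩, ?_⟩, ?_⟩, ?_⟩
  · intro v
    obtain ⟨w, hw⟩ := hlam.1.1.1 v
    exact ⟨Quotient.mk _ w, hw⟩
  · intro h
    obtain ⟨e, he⟩ := hlam.1.1.2 h
    have hc : ¬ IsContractionEdge lam e := by
      intro hc
      have := (mapsToEdge_props he).2.2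
      rw [IsContractionEdge] at hc
      omega
    refine ⟨⟨e, hc⟩, ?_⟩
    unfold MapsToEdge; erw [hlen]
    have := mapsToEdge_unique (segEdge_spec lam hlam e hc) he
    rw [this]
  · intro e hs
    rw [IsSubdivisionEdge, ← pathEdges_length, hlen] at hs
    simp at hs
  · intro h e₁ e₂ hm1 hm2
    rw [MapsToEdge, hlen] at hm1 hm2
    have h1 : segEdge lam hlam e₁.1 e₁.2 = h := by simpa using hm1
    have h2 : segEdge lam hlam e₂.1 e₂.2 = h := by simpa using hm2
    have he1 := segEdge_spec lam hlam e₁.1 e₁.2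
    have he2 := segEdge_spec lam hlam e₂.1 e₂.2
    rw [h1] at he1; rw [h2] at he2
    exact Subtype.ext (hlam.2 h e₁.1 e₂.1 he1 he2)
  · intro e hc
    rw [IsContractionEdge, ← pathEdges_length, hlen] at hc
    simp at hc

end Existence
section Transfer

variable {G₁ G₂ K K' : CausalNet} {lam : G₁ ⟶ G₂} {lcon : G₁ ⟶ K} {lm : K ⟶ G₂}
  {lcon' : G₁ ⟶ K'} {lm' : K' ⟶ G₂}

theorem mer_edge_len (hm : IsMerging lm) (h : K.E) : (edgePath lm h).length = 1 := by
  have h1 := hm.2 h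
  have h2 := hm.1.1.2 h
  rw [IsContractionEdge] at h1
  rw [IsSubdivisionEdge] at h2
  omega

theorem pmap_len_mer (hm : IsMerging lm) {a b : K.V} (p : Quiver.Path a b) :
    (pmap lm p).length = p.length := by
  rw [← pathEdges_length, pathEdges_pmap, ← pathEdges_length (p := p)]
  induction pathEdges p with
  | nil => simp
  | cons x l ih =>
      rw [List.flatMap_cons, List.length_append, ih, pathEdges_length, mer_edge_len hm]
      simp [Nat.add_comm]

theorem fact_con_iff (hm : IsMerging lm) (hfac : lcon ≫ lm = lam) (e : G₁.E) :
    IsContractionEdge lcon e ↔ IsContractionEdge lam e := by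
  erw [IsContractionEdge, IsContractionEdge, ← hfac, edgePath_comp', pmap_len_mer hm]

theorem fact_vmap (hfac : lcon ≫ lm = lam) (w : G₁.V) :
    vmap lm (vmap lcon w) = vmap lam w := by rw [← hfac]; rfl

theorem fact_edge_exists (hcon : IsContractionMor lcon) (hm : IsMerging lm)
    (hfac : lcon ≫ lm = lam) {e : G₁.E} (he : ¬ IsContractionEdge lam e) :
    ∃ h, MapsToEdge lcon e h :=
  exists_mapsToEdge (fun hc => he ((fact_con_iff hm hfac e).mp hc)) (hcon.1.1.2 e)

theorem fact_edge_lam (hfac : lcon ≫ lm = lam) {e : G₁.E} {h : K.E}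
    (hme : MapsToEdge lcon e h) :
    pathEdges (edgePath lam e) = pathEdges (edgePath lm h) := by
  erw [← hfac, edgePath_comp', pathEdges_pmap,
    show pathEdges (edgePath lcon e) = [h] from hme]
  simp

theorem walk_eqv (hm : IsMerging lm) (hfac : lcon ≫ lm = lam) {v : K.V} :
    ∀ {x y : (fiber lcon v).V}, (undirected (fiber lcon v)).Walk x y →
      Relation.EqvGen (conRel lam) x.1 y.1 := by
  intro x y walk
  induction walk with
  | nil => exact Relation.EqvGen.refl _
  | @cons a b c adj tail ih =>
      refine Relation.EqvGen.trans _ b.1 _ ?_ ih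
      obtain ⟨hne, ef, hef⟩ := adj
      have hcLam : IsContractionEdge lam ef.1 := (fact_con_iff hm hfac ef.1).mp ef.2.1
      rcases hef with ⟨h1, h2⟩ | ⟨h1, h2⟩
      · exact Relation.EqvGen.rel _ _
          ⟨ef.1, hcLam, congrArg Subtype.val h1, congrArg Subtype.val h2⟩
      · exact Relation.EqvGen.symm _ _ (Relation.EqvGen.rel _ _
          ⟨ef.1, hcLam, congrArg Subtype.val h1, congrArg Subtype.val h2⟩)

theorem eqv_of_vmap_eq (hcon : IsContractionMor lcon) (hm : IsMerging lm)
    (hfac : lcon ≫ lm = lam) {w w' : G₁.V} (h : vmap lcon w = vmap lcon w') :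
    Relation.EqvGen (conRel lam) w w' := by
  have hreach : (undirected (fiber lcon (vmap lcon w))).Reachable ⟨w, rfl⟩ ⟨w', h.symm⟩ :=
    (hcon.2 (vmap lcon w)).preconnected _ _
  obtain ⟨walk⟩ := hreach
  exact walk_eqv hm hfac walk

theorem vmap_eq_of_eqv (hm : IsMerging lm) (hfac : lcon ≫ lm = lam) {w w' : G₁.V}
    (h : Relation.EqvGen (conRel lam) w w') : vmap lcon w = vmap lcon w' := by
  induction h with
  | rel x y hr =>
      obtain ⟨e, hc, rfl, rfl⟩ := hr
      exact Quiver.Path.eq_of_length_zero (edgePath lcon e) ((fact_con_iff hm hfac e).mpr hc)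
  | refl x => rfl
  | symm x y _ ih => exact ih.symm
  | trans x y z _ _ ih1 ih2 => exact ih1.trans ih2

/-- the vertex map of the comparison morphism -/
noncomputable def transV (hcon : IsContractionMor lcon) (lc' : G₁ ⟶ K') : K.V → K'.V :=
  fun v => vmap lc' (hcon.1.1.1.1 v).choose

theorem transV_spec (hcon : IsContractionMor lcon) (hm : IsMerging lm)
    (hfac : lcon ≫ lm = lam) (hm' : IsMerging lm') (hfac' : lcon' ≫ lm' = lam)
    (w : G₁.V) : transV hcon lcon' (vmap lcon w) = vmap lcon' w :=
  vmap_eq_of_eqv hm' hfac'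
    (eqv_of_vmap_eq hcon hm hfac ((hcon.1.1.1.1 (vmap lcon w)).choose_spec))

theorem transE_exists (hm : IsMerging lm) (hfac : lcon ≫ lm = lam)
    (hcon' : IsContractionMor lcon') (hm' : IsMerging lm') (hfac' : lcon' ≫ lm' = lam)
    {e : G₁.E} {h : K.E} (hme : MapsToEdge lcon e h) :
    ∃ h', MapsToEdge lcon' e h' := by
  have hlen := (mapsToEdge_props hme).2.2
  have hnc : ¬ IsContractionEdge lcon e := by rw [IsContractionEdge]; omega
  have hncl : ¬ IsContractionEdge lam e := fun hc => hnc ((fact_con_iff hm hfac e).mpr hc)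
  have hnc' : ¬ IsContractionEdge lcon' e := fun hc => hncl ((fact_con_iff hm' hfac' e).mp hc)
  exact exists_mapsToEdge hnc' (hcon'.1.1.2 e)

variable (hcon : IsContractionMor lcon) (hm : IsMerging lm) (hfac : lcon ≫ lm = lam)
  (hcon' : IsContractionMor lcon') (hm' : IsMerging lm') (hfac' : lcon' ≫ lm' = lam)

/-- the edge map of the comparison morphism -/
noncomputable def transE : K.E → K'.E := fun h =>
  (transE_exists hm hfac hcon' hm' hfac' ((hcon.1.1.1.2 h).choose_spec)).choose

theorem transE_spec (h : K.E) :
    ∃ e, MapsToEdge lcon e h ∧ MapsToEdge lcon' e (transE hcon hm hfac hcon' hm' hfac' h) :=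
  ⟨(hcon.1.1.1.2 h).choose, (hcon.1.1.1.2 h).choose_spec,
    (transE_exists hm hfac hcon' hm' hfac' ((hcon.1.1.1.2 h).choose_spec)).choose_spec⟩

theorem transE_char {e : G₁.E} {h : K.E} {h' : K'.E} (h1 : MapsToEdge lcon e h)
    (h2 : MapsToEdge lcon' e h') : transE hcon hm hfac hcon' hm' hfac' h = h' := by
  obtain ⟨e0, he0, he0'⟩ := transE_spec hcon hm hfac hcon' hm' hfac' h
  have he : e0 = e := hcon.1.2 h e0 e he0 h1
  subst he
  exact mapsToEdge_unique he0' h2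

theorem transE_src (h : K.E) :
    K'.src (transE hcon hm hfac hcon' hm' hfac' h) = transV hcon lcon' (K.src h) := by
  obtain ⟨e, he, he'⟩ := transE_spec hcon hm hfac hcon' hm' hfac' h
  rw [(mapsToEdge_props he').1, (mapsToEdge_props he).1,
    transV_spec hcon hm hfac hm' hfac']

theorem transE_tgt (h : K.E) :
    K'.tgt (transE hcon hm hfac hcon' hm' hfac' h) = transV hcon lcon' (K.tgt h) := by
  obtain ⟨e, he, he'⟩ := transE_spec hcon hm hfac hcon' hm' hfac' h
  rw [(mapsToEdge_props he').2.1, (mapsToEdge_props he).2.1,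
    transV_spec hcon hm hfac hm' hfac']

/-- the comparison morphism between the middle objects of two factorizations -/
noncomputable def transMor : K ⟶ K' :=
  mkHom (transV hcon lcon') (transE hcon hm hfac hcon' hm' hfac')
    (transE_src hcon hm hfac hcon' hm' hfac') (transE_tgt hcon hm hfac hcon' hm' hfac')

theorem transMor_edge (h : K.E) :
    pathEdges (edgePath (transMor hcon hm hfac hcon' hm' hfac') h) =
      [transE hcon hm hfac hcon' hm' hfac' h] := by
  unfold transMor
  exact mkHom_edge _ _ _ _ h

theorem trans_comm₁ : lcon ≫ transMor hcon hm hfac hcon' hm' hfac' = lcon' := by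
  apply hom_ext
  · intro a
    exact transV_spec hcon hm hfac hm' hfac' a
  · intro e
    erw [edgePath_comp', pathEdges_pmap]
    by_cases hc : IsContractionEdge lam e
    · rw [pathEdges_eq_nil_of_length_zero _ ((fact_con_iff hm hfac e).mpr hc),
        pathEdges_eq_nil_of_length_zero _ ((fact_con_iff hm' hfac' e).mpr hc)]
      rfl
    · obtain ⟨h, hme⟩ := fact_edge_exists hcon hm hfac hc
      obtain ⟨h', hme'⟩ := fact_edge_exists hcon' hm' hfac' hc
      rw [show pathEdges (edgePath lcon e) = [h] from hme,
        show pathEdges (edgePath lcon' e) = [h'] from hme']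
      simp only [List.flatMap_cons, List.flatMap_nil, List.append_nil]
      rw [transMor_edge, transE_char hcon hm hfac hcon' hm' hfac' hme hme']

theorem trans_comm₂ : transMor hcon hm hfac hcon' hm' hfac' ≫ lm' = lm := by
  apply hom_ext
  · intro v
    obtain ⟨w, rfl⟩ := hcon.1.1.1.1 v
    show vmap lm' (transV hcon lcon' (vmap lcon w)) = vmap lm (vmap lcon w)
    rw [transV_spec hcon hm hfac hm' hfac', fact_vmap hfac', fact_vmap hfac]
  · intro h
    obtain ⟨e, hme, hme'⟩ := transE_spec hcon hm hfac hcon' hm' hfac' h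
    erw [edgePath_comp', pathEdges_pmap, transMor_edge]
    simp only [List.flatMap_cons, List.flatMap_nil, List.append_nil]
    rw [← fact_edge_lam hfac' hme', ← fact_edge_lam hfac hme]

theorem trans_inv :
    transMor hcon hm hfac hcon' hm' hfac' ≫ transMor hcon' hm' hfac' hcon hm hfac = 𝟙 K := by
  apply hom_ext
  · intro v
    obtain ⟨w, rfl⟩ := hcon.1.1.1.1 v
    show transV hcon' lcon (transV hcon lcon' (vmap lcon w)) = vmap lcon w
    rw [transV_spec hcon hm hfac hm' hfac', transV_spec hcon' hm' hfac' hm hfac]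
  · intro h
    obtain ⟨e, hme, hme'⟩ := transE_spec hcon hm hfac hcon' hm' hfac' h
    erw [edgePath_comp', pathEdges_pmap, transMor_edge]
    simp only [List.flatMap_cons, List.flatMap_nil, List.append_nil]
    rw [transMor_edge, transE_char hcon' hm' hfac' hcon hm hfac hme' hme, id_edge]

end Transfer

theorem vertexCoarseGraining_factorization {G₁ G₂ : CausalNet} (lam : G₁ ⟶ G₂)
    (hlam : IsVertexCoarseGraining lam) :
    (∃ (K : CausalNet) (lcon : G₁ ⟶ K) (lm : K ⟶ G₂),
        IsContractionMor lcon ∧ IsMerging lm ∧ lcon ≫ lm = lam) ∧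
    (∀ (K K' : CausalNet) (lcon : G₁ ⟶ K) (lm : K ⟶ G₂) (lcon' : G₁ ⟶ K') (lm' : K' ⟶ G₂),
        IsContractionMor lcon → IsMerging lm → lcon ≫ lm = lam →
        IsContractionMor lcon' → IsMerging lm' → lcon' ≫ lm' = lam →
        ∃ φ : K ⟶ K', IsIso φ ∧ lcon ≫ φ = lcon' ∧ φ ≫ lm' = lm) := by
  constructor
  · exact ⟨Kc lam hlam, lconMor lam hlam, lmMor lam hlam, lcon_isContraction lam hlam,
      lm_isMerging lam hlam, lcon_fac lam hlam⟩
  · intro K K' lcon lm lcon' lm' hcon hm hfac hcon' hm' hfac'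
    refine ⟨transMor hcon hm hfac hcon' hm' hfac', ?_,
      trans_comm₁ hcon hm hfac hcon' hm' hfac', trans_comm₂ hcon hm hfac hcon' hm' hfac'⟩
    exact ⟨transMor hcon' hm' hfac' hcon hm hfac,
      trans_inv hcon hm hfac hcon' hm' hfac', trans_inv hcon' hm' hfac' hcon hm hfac⟩

end CausalNets
end

section
/- For causal-nets H and G, the following are equivalent: (1) H is isomorphic to a sub-causal-net of G; (2) there exists an embedding λ : H → G; (3) H can be obtained from G, up to isomorphism, by a finite sequence of operations of deleting an edge or deleting an isolated vertex. -/
open CategoryTheory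

namespace CausalNets

variable {G H K : CausalNet}

def DeleteEdgeStep (A B : CausalNet) : Prop :=
  ∃ (e₀ : A.E) (fV : B.V ≃ A.V) (fE : B.E ≃ {e : A.E // e ≠ e₀}),
    ∀ h : B.E, A.src (fE h).1 = fV (B.src h) ∧ A.tgt (fE h).1 = fV (B.tgt h)

def DeleteIsolatedVertexStep (A B : CausalNet) : Prop :=
  ∃ v₀ : A.V, IsolatedVertex A v₀ ∧
    ∃ (fV : B.V ≃ {v : A.V // v ≠ v₀}) (fE : B.E ≃ A.E),
      ∀ h : B.E, A.src (fE h) = (fV (B.src h)).1 ∧ A.tgt (fE h) = (fV (B.tgt h)).1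

def SubNetStep (A B : CausalNet) : Prop :=
  DeleteEdgeStep A B ∨ DeleteIsolatedVertexStep A B ∨ IsIsomorphicTo A B

section SubNetAux

lemma src_ne_tgt' (G : CausalNet) (e : G.E) : G.src e ≠ G.tgt e := by
  intro h
  have hp := G.acyclic (G.src e)
    (Quiver.Hom.toPath (⟨e, rfl, h.symm⟩ : G.src e ⟶ G.src e))
  simp [Quiver.Hom.toPath] at hp

/-- Graph-theoretic embedding between causal nets. -/
def GraphEmb (H G : CausalNet) : Prop :=
  ∃ (fV : H.V → G.V) (fE : H.E → G.E),
    Function.Injective fV ∧ Function.Injective fE ∧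
    (∀ e, G.src (fE e) = fV (H.src e)) ∧ (∀ e, G.tgt (fE e) = fV (H.tgt e))

lemma graphEmb_refl (G : CausalNet) : GraphEmb G G :=
  ⟨id, id, fun _ _ h => h, fun _ _ h => h, fun _ => rfl, fun _ => rfl⟩

lemma graphEmb_trans (h1 : GraphEmb H K) (h2 : GraphEmb K G) : GraphEmb H G := by
  obtain ⟨fV, fE, hVi, hEi, hs, ht⟩ := h1
  obtain ⟨gV, gE, gVi, gEi, gs, gt⟩ := h2
  refine ⟨gV ∘ fV, gE ∘ fE, gVi.comp hVi, gEi.comp hEi, fun e => ?_, fun e => ?_⟩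
  · show G.src (gE (fE e)) = gV (fV (H.src e)); rw [gs, hs]
  · show G.tgt (gE (fE e)) = gV (fV (H.tgt e)); rw [gt, ht]

/-- The prefunctor induced by a graph morphism. -/
def pre (fV : H.V → G.V) (fE : H.E → G.E)
    (hs : ∀ e, G.src (fE e) = fV (H.src e)) (ht : ∀ e, G.tgt (fE e) = fV (H.tgt e)) :
    H.V ⥤q G.V where
  obj := fV
  map f := ⟨fE (Subtype.val f), by rw [hs, (Subtype.prop f).1],
    by rw [ht, (Subtype.prop f).2]⟩

/-- The causal-net morphism induced by a graph morphism. -/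
def mor (fV : H.V → G.V) (fE : H.E → G.E)
    (hs : ∀ e, G.src (fE e) = fV (H.src e)) (ht : ∀ e, G.tgt (fE e) = fV (H.tgt e)) :
    H ⟶ G where
  obj := fV
  map p := (pre fV fE hs ht).mapPath p
  map_id _ := rfl
  map_comp p q := (pre fV fE hs ht).mapPath_comp p q

lemma edgePath_mor (fV : H.V → G.V) (fE : H.E → G.E) (hs ht) (e : H.E) :
    edgePath (mor fV fE hs ht) e =
      Quiver.Hom.toPath ((pre fV fE hs ht).map (edgeHom H e)) :=
  Prefunctor.mapPath_toPath _ _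

lemma mapPath_injective (P : H.V ⥤q G.V) (hobj : Function.Injective P.obj)
    (hmap : ∀ {a b : H.V} (f g : a ⟶ b), P.map f = P.map g → f = g)
    {a b : H.V} (p : Quiver.Path a b) :
    ∀ (q : Quiver.Path a b), P.mapPath p = P.mapPath q → p = q := by
  induction p with
  | nil =>
    intro q h
    have hl : q.length = 0 := by
      have h2 := congrArg Quiver.Path.length h
      rw [mapPath_length, mapPath_length] at h2
      simpa using h2.symm
    exact (Quiver.Path.eq_nil_of_length_zero q hl).symm
  | cons p' f ih =>
    intro q h
    cases q with
    | nil =>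
      exfalso
      have h2 := congrArg Quiver.Path.length h
      rw [mapPath_length, mapPath_length] at h2
      simp at h2
    | cons q' g =>
      rw [Prefunctor.mapPath_cons, Prefunctor.mapPath_cons] at h
      have hmid := hobj (Quiver.Path.obj_eq_of_cons_eq_cons h)
      subst hmid
      rw [ih q' (eq_of_heq (Quiver.Path.heq_of_cons_eq_cons h)),
        hmap f g (eq_of_heq (Quiver.Path.hom_heq_of_cons_eq_cons h))]

lemma isEmbedding_mor (fV : H.V → G.V) (fE : H.E → G.E) (hs ht)
    (hVi : Function.Injective fV) (hEi : Function.Injective fE) :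
    IsEmbedding (mor fV fE hs ht) := by
  constructor
  · refine ⟨hVi, fun a b p q hpq => ?_⟩
    exact mapPath_injective (pre fV fE hs ht) hVi
      (fun f g hfg => Subtype.ext (hEi (congrArg Subtype.val hfg))) p q hpq
  · intro e hsub
    have h2 : 2 ≤ (edgePath (mor fV fE hs ht) e).length := hsub
    rw [edgePath_mor] at h2
    simp [Quiver.Hom.toPath] at h2
    revert h2; show 2 ≤ 0 + 1 → False; omega

lemma exists_embedding_of_graphEmb (h : GraphEmb H G) : ∃ φ : H ⟶ G, IsEmbedding φ := by
  obtain ⟨fV, fE, hVi, hEi, hs, ht⟩ := h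
  exact ⟨mor fV fE hs ht, isEmbedding_mor fV fE hs ht hVi hEi⟩

lemma hom_heq {a b a' b' : H.V} (ha : a = a') (hb : b = b')
    (f : a ⟶ b) (f' : a' ⟶ b') (hv : homEdge f = homEdge f') : HEq f f' := by
  subst ha; subst hb; exact heq_of_eq (Subtype.ext hv)

lemma toPath_heq {a b a' b' : H.V} (ha : a = a') (hb : b = b')
    {f : a ⟶ b} {f' : a' ⟶ b'} (h : HEq f f') :
    HEq (Quiver.Hom.toPath f) (Quiver.Hom.toPath f') := by
  subst ha; subst hb; exact heq_of_eq (congrArg _ (eq_of_heq h))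

lemma pmap_heq (φ : H ⟶ G) {a b a' b' : H.V} (ha : a = a') (hb : b = b')
    {p : Quiver.Path a b} {p' : Quiver.Path a' b'} (h : HEq p p') :
    HEq (pmap φ p) (pmap φ p') := by
  subst ha; subst hb; exact heq_of_eq (congrArg _ (eq_of_heq h))

lemma exists_toPath {a b : G.V} (p : Quiver.Path a b) (h : p.length = 1) :
    ∃ f : a ⟶ b, p = Quiver.Hom.toPath f := by
  cases p with
  | nil => simp at h
  | cons q f =>
    have hq : q.length = 0 := by simpa using h
    obtain rfl := Quiver.Path.eq_of_length_zero q hq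
    rw [Quiver.Path.eq_nil_of_length_zero q hq]
    exact ⟨f, rfl⟩

lemma length_edgePath_of_embedding (φ : H ⟶ G) (h : IsEmbedding φ) (e : H.E) :
    (edgePath φ e).length = 1 := by
  have h2 : ¬ 2 ≤ (edgePath φ e).length := h.2 e
  have h0 : (edgePath φ e).length ≠ 0 := fun h0 =>
    src_ne_tgt' H e (h.1.1 (Quiver.Path.eq_of_length_zero _ h0))
  omega

lemma graphEmb_of_embedding (φ : H ⟶ G) (h : IsEmbedding φ) : GraphEmb H G := by
  have hch : ∀ e : H.E, ∃ f : vmap φ (H.src e) ⟶ vmap φ (H.tgt e),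
      edgePath φ e = Quiver.Hom.toPath f :=
    fun e => exists_toPath _ (length_edgePath_of_embedding φ h e)
  choose f hf using hch
  refine ⟨vmap φ, fun e => homEdge (f e), h.1.1, ?_,
    fun e => (Subtype.prop (f e)).1, fun e => (Subtype.prop (f e)).2⟩
  intro e₁ e₂ hfe
  have hs12 : H.src e₁ = H.src e₂ := h.1.1 (by
    rw [← (Subtype.prop (f e₁)).1, ← (Subtype.prop (f e₂)).1]
    exact congrArg G.src hfe)
  have ht12 : H.tgt e₁ = H.tgt e₂ := h.1.1 (by
    rw [← (Subtype.prop (f e₁)).2, ← (Subtype.prop (f e₂)).2]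
    exact congrArg G.tgt hfe)
  let f₂ : H.src e₁ ⟶ H.tgt e₁ := ⟨e₂, hs12.symm, ht12.symm⟩
  have key : pmap φ (Quiver.Hom.toPath (edgeHom H e₁)) =
      pmap φ (Quiver.Hom.toPath f₂) := by
    have h1 : HEq (pmap φ (Quiver.Hom.toPath f₂)) (edgePath φ e₂) :=
      pmap_heq φ hs12 ht12 (toPath_heq hs12 ht12 (hom_heq hs12 ht12 f₂ (edgeHom H e₂) rfl))
    have h2 : HEq (edgePath φ e₂) (Quiver.Hom.toPath (f e₁)) := by
      rw [hf e₂]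
      exact toPath_heq (congrArg (vmap φ) hs12.symm) (congrArg (vmap φ) ht12.symm)
        (hom_heq (congrArg (vmap φ) hs12.symm) (congrArg (vmap φ) ht12.symm)
          (f e₂) (f e₁) hfe.symm)
    have h3 : pmap φ (Quiver.Hom.toPath (edgeHom H e₁)) = Quiver.Hom.toPath (f e₁) := hf e₁
    rw [h3]
    exact (eq_of_heq (h1.trans h2)).symm
  have hp := h.1.2 _ _ _ _ key
  exact congrArg homEdge (eq_of_heq (Quiver.Path.hom_heq_of_cons_eq_cons hp))

lemma length_conj {x y z w : Paths G.V} (h : x = y) (t : y ⟶ z) (h' : z = w) :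
    (eqToHom h ≫ t ≫ eqToHom h' : x ⟶ w).length = t.length := by
  subst h; subst h'; simp

lemma length_map_le (ψ : G ⟶ H)
    (h1 : ∀ {a b : G.V} (g : a ⟶ b), 1 ≤ (pmap ψ (Quiver.Hom.toPath g)).length) :
    ∀ {a b : G.V} (p : Quiver.Path a b), p.length ≤ (pmap ψ p).length := by
  intro a b p
  induction p with
  | nil => exact Nat.zero_le _
  | cons p' g ih =>
    have e1 : (pmap ψ (p'.cons g)).length =
        (pmap ψ p').length + (pmap ψ (Quiver.Hom.toPath g)).length := by
      show ((ψ : Paths G.V ⥤ Paths H.V).map (p' ≫ Quiver.Hom.toPath g)).length = _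
      refine (congrArg Quiver.Path.length
        ((ψ : Paths G.V ⥤ Paths H.V).map_comp (X := a) p' (Quiver.Hom.toPath g))).trans ?_
      exact Quiver.Path.length_comp _ _
    rw [Quiver.Path.length_cons, e1]
    exact Nat.add_le_add ih (h1 g)

lemma embedding_of_isIso (φ : G ⟶ H) (hiso : IsIso φ) : IsEmbedding φ := by
  obtain ⟨⟨ψ, h1, h2⟩⟩ := hiso
  have hobj1 : ∀ v : G.V, vmap ψ (vmap φ v) = v := fun v => Functor.congr_obj h1 v
  have hobj2 : ∀ v : H.V, vmap φ (vmap ψ v) = v := fun v => Functor.congr_obj h2 v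
  have hVinj : Function.Injective (vmap φ) := fun a b hab => by
    rw [← hobj1 a, ← hobj1 b, hab]
  have hVinj2 : Function.Injective (vmap ψ) := fun a b hab => by
    rw [← hobj2 a, ← hobj2 b, hab]
  have hincl : IsInclusion φ := by
    refine ⟨hVinj, fun a b p q hpq => ?_⟩
    have h3 : (φ ≫ ψ : G ⟶ G).map p = (φ ≫ ψ : G ⟶ G).map q :=
      congrArg (fun r => (ψ : Paths H.V ⥤ Paths G.V).map r) hpq
    rw [Functor.congr_hom h1 p, Functor.congr_hom h1 q] at h3
    exact (cancel_mono _).mp ((cancel_epi _).mp h3)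
  have hnc : ∀ {a b : H.V} (g : a ⟶ b), 1 ≤ (pmap ψ (Quiver.Hom.toPath g)).length := by
    intro a b g
    by_contra hlt
    push_neg at hlt
    have h0 : (pmap ψ (Quiver.Hom.toPath g)).length = 0 := by omega
    have hab : a = b := hVinj2 (Quiver.Path.eq_of_length_zero _ h0)
    exact src_ne_tgt' H (Subtype.val g)
      (by rw [(Subtype.prop g).1, (Subtype.prop g).2, hab])
  refine ⟨hincl, fun e hsub => ?_⟩
  have hsub' : 2 ≤ (edgePath φ e).length := hsub
  have hle := length_map_le ψ hnc (edgePath φ e)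
  have hone : (pmap ψ (edgePath φ e)).length = 1 := by
    have hcomp : pmap ψ (edgePath φ e) =
        (φ ≫ ψ : G ⟶ G).map (Quiver.Hom.toPath (edgeHom G e)) := rfl
    rw [hcomp, Functor.congr_hom h1 (X := G.src e) (Y := G.tgt e) (Quiver.Hom.toPath (edgeHom G e))]
    refine (length_conj (G := G) _ _ _).trans ?_
    rfl
  omega

lemma toPath_conj {V : Type} [Quiver V] {a b a' b' : V} (ha : a' = a) (hb : b' = b)
    {f : a ⟶ b} {f' : a' ⟶ b'} (hv : HEq f' f) :
    (Quiver.Hom.toPath f' : (Paths.of V).obj a' ⟶ (Paths.of V).obj b') =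
      eqToHom (congrArg (Paths.of V).obj ha) ≫ Quiver.Hom.toPath f ≫
        eqToHom (congrArg (Paths.of V).obj hb).symm := by
  subst ha; subst hb
  rw [eq_of_heq hv]
  simp
  rfl

lemma mor_comp_eq_id (fV : H.V → G.V) (fE : H.E → G.E) (hs ht)
    (gV : G.V → H.V) (gE : G.E → H.E) (gs gt)
    (hV : ∀ v, gV (fV v) = v) (hE : ∀ e, gE (fE e) = e) :
    mor fV fE hs ht ≫ mor gV gE gs gt = 𝟙 H := by
  refine Paths.ext_functor (funext hV) ?_
  intro a b e
  show (pre gV gE gs gt).mapPath ((pre fV fE hs ht).mapPath (Quiver.Hom.toPath e)) = _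
  rw [Prefunctor.mapPath_toPath, Prefunctor.mapPath_toPath]
  exact toPath_conj (hV a) (hV b)
    (hom_heq (hV a) (hV b) ((pre gV gE gs gt).map ((pre fV fE hs ht).map e)) e
      (hE (homEdge e)))

lemma iso_of_equiv (eV : G.V ≃ H.V) (eE : G.E ≃ H.E)
    (hs : ∀ e, H.src (eE e) = eV (G.src e)) (ht : ∀ e, H.tgt (eE e) = eV (G.tgt e)) :
    IsIsomorphicTo G H := by
  have gs : ∀ h, G.src (eE.symm h) = eV.symm (H.src h) := fun h =>
    eV.injective (by rw [← hs, Equiv.apply_symm_apply, Equiv.apply_symm_apply])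
  have gt : ∀ h, G.tgt (eE.symm h) = eV.symm (H.tgt h) := fun h =>
    eV.injective (by rw [← ht, Equiv.apply_symm_apply, Equiv.apply_symm_apply])
  refine ⟨mor (H := G) (G := H) eV eE hs ht, ⟨⟨mor eV.symm eE.symm gs gt, ?_, ?_⟩⟩⟩
  · exact mor_comp_eq_id _ _ _ _ _ _ _ _ eV.symm_apply_apply eE.symm_apply_apply
  · exact mor_comp_eq_id _ _ _ _ _ _ _ _ eV.apply_symm_apply eE.apply_symm_apply

lemma iso_of_surj (fV : H.V → G.V) (fE : H.E → G.E)
    (hVi : Function.Injective fV) (hEi : Function.Injective fE)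
    (hs : ∀ e, G.src (fE e) = fV (H.src e)) (ht : ∀ e, G.tgt (fE e) = fV (H.tgt e))
    (hV : Function.Surjective fV) (hE : Function.Surjective fE) :
    IsIsomorphicTo G H := by
  refine iso_of_equiv (Equiv.ofBijective fV ⟨hVi, hV⟩).symm
    (Equiv.ofBijective fE ⟨hEi, hE⟩).symm (fun e => ?_) (fun e => ?_)
  · apply hVi
    show fV (H.src _) = fV ((Equiv.ofBijective fV ⟨hVi, hV⟩).symm (G.src e))
    rw [← hs, Equiv.ofBijective_apply_symm_apply fE ⟨hEi, hE⟩,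
      Equiv.ofBijective_apply_symm_apply fV ⟨hVi, hV⟩]
  · apply hVi
    show fV (H.tgt _) = fV ((Equiv.ofBijective fV ⟨hVi, hV⟩).symm (G.tgt e))
    rw [← ht, Equiv.ofBijective_apply_symm_apply fE ⟨hEi, hE⟩,
      Equiv.ofBijective_apply_symm_apply fV ⟨hVi, hV⟩]

/-- Delete an edge. -/
noncomputable def delE (G : CausalNet) (e₀ : G.E) : CausalNet where
  V := G.V
  E := {e : G.E // e ≠ e₀}
  src e := G.src e.1
  tgt e := G.tgt e.1
  fintypeV := G.fintypeV
  fintypeE := Fintype.ofFinite _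
  acyclic := noCycleData_of_map _ _ G id Subtype.val (fun _ => rfl) (fun _ => rfl)

/-- Delete an isolated vertex. -/
noncomputable def delV (G : CausalNet) (v₀ : G.V) (h : IsolatedVertex G v₀) : CausalNet where
  V := {v : G.V // v ≠ v₀}
  E := G.E
  src e := ⟨G.src e, (h e).1⟩
  tgt e := ⟨G.tgt e, (h e).2⟩
  fintypeV := Fintype.ofFinite _
  fintypeE := G.fintypeE
  acyclic := noCycleData_of_map _ _ G Subtype.val id (fun _ => rfl) (fun _ => rfl)

lemma delE_step (G : CausalNet) (e₀ : G.E) : SubNetStep G (delE G e₀) :=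
  Or.inl ⟨e₀, Equiv.refl _, Equiv.refl _, fun _ => ⟨rfl, rfl⟩⟩

lemma delV_step (G : CausalNet) (v₀ : G.V) (h : IsolatedVertex G v₀) :
    SubNetStep G (delV G v₀ h) :=
  Or.inr (Or.inl ⟨v₀, h, Equiv.refl _, Equiv.refl _, fun _ => ⟨rfl, rfl⟩⟩)

lemma steps_of_graphEmb : ∀ (n : ℕ) (G H : CausalNet),
    Fintype.card G.V + Fintype.card G.E ≤ n → GraphEmb H G →
    Relation.ReflTransGen SubNetStep G H := by
  intro n
  induction n with
  | zero =>
    rintro G H hn ⟨fV, fE, hVi, hEi, hs, ht⟩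
    haveI hv : IsEmpty G.V := Fintype.card_eq_zero_iff.mp (by omega)
    haveI he : IsEmpty G.E := Fintype.card_eq_zero_iff.mp (by omega)
    exact Relation.ReflTransGen.single (Or.inr (Or.inr
      (iso_of_surj fV fE hVi hEi hs ht (fun v => isEmptyElim v) (fun e => isEmptyElim e))))
  | succ n ih =>
    rintro G H hn ⟨fV, fE, hVi, hEi, hs, ht⟩
    classical
    by_cases hE : Function.Surjective fE
    · by_cases hV : Function.Surjective fV
      · exact Relation.ReflTransGen.single (Or.inr (Or.inr
          (iso_of_surj fV fE hVi hEi hs ht hV hE)))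
      · rw [Function.Surjective] at hV
        push_neg at hV
        obtain ⟨v₀, hv₀⟩ := hV
        have hisol : IsolatedVertex G v₀ := by
          intro e
          obtain ⟨e', rfl⟩ := hE e
          exact ⟨by rw [hs]; exact hv₀ _, by rw [ht]; exact hv₀ _⟩
        refine Relation.ReflTransGen.head (delV_step G v₀ hisol)
          (ih (delV G v₀ hisol) H ?_ ?_)
        · have hcV : Fintype.card (delV G v₀ hisol).V < Fintype.card G.V := by
            have h2 : Fintype.card (delV G v₀ hisol).V =
                Fintype.card {v : G.V // v ≠ v₀} := Fintype.card_congr (Equiv.refl _)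
            rw [h2]
            exact Fintype.card_subtype_lt (x := v₀) (by simp)
          have hcE : Fintype.card (delV G v₀ hisol).E = Fintype.card G.E := rfl
          omega
        · exact ⟨fun v => ⟨fV v, hv₀ v⟩, fE,
            fun a b hab => hVi (congrArg Subtype.val hab), hEi,
            fun e => Subtype.ext (hs e), fun e => Subtype.ext (ht e)⟩
    · rw [Function.Surjective] at hE
      push_neg at hE
      obtain ⟨e₀, he₀⟩ := hE
      refine Relation.ReflTransGen.head (delE_step G e₀) (ih (delE G e₀) H ?_ ?_)
      · have hcE : Fintype.card (delE G e₀).E < Fintype.card G.E := by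
          have h2 : Fintype.card (delE G e₀).E =
              Fintype.card {e : G.E // e ≠ e₀} := Fintype.card_congr (Equiv.refl _)
          rw [h2]
          exact Fintype.card_subtype_lt (x := e₀) (by simp)
        have hcV : Fintype.card (delE G e₀).V = Fintype.card G.V := rfl
        omega
      · exact ⟨fV, fun e => ⟨fE e, he₀ e⟩, hVi,
          fun a b hab => hEi (congrArg Subtype.val hab),
          fun e => hs e, fun e => ht e⟩

lemma graphEmb_of_step {A B : CausalNet} (h : SubNetStep A B) : GraphEmb B A := by
  rcases h with ⟨e₀, fV, fE, hcond⟩ | ⟨v₀, hv₀, fV, fE, hcond⟩ | ⟨φ, hiso⟩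
  · exact ⟨fV, fun e => (fE e).1, fV.injective,
      fun a b hab => fE.injective (Subtype.ext hab),
      fun e => (hcond e).1, fun e => (hcond e).2⟩
  · exact ⟨fun v => (fV v).1, fE,
      fun a b hab => fV.injective (Subtype.ext hab), fE.injective,
      fun e => (hcond e).1, fun e => (hcond e).2⟩
  · haveI := hiso
    exact graphEmb_of_embedding (inv φ) (embedding_of_isIso (inv φ) inferInstance)

lemma graphEmb_of_steps (h : Relation.ReflTransGen SubNetStep G H) : GraphEmb H G := by
  induction h with
  | refl => exact graphEmb_refl G
  | tail _ hstep ih => exact graphEmb_trans (graphEmb_of_step hstep) ih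

lemma graphEmb_mkSub (G : CausalNet) (Vs : Set G.V) (Es : Set G.E)
    (hs : ∀ e ∈ Es, G.src e ∈ Vs) (ht : ∀ e ∈ Es, G.tgt e ∈ Vs) :
    GraphEmb (mkSub G Vs Es hs ht) G :=
  ⟨Subtype.val, Subtype.val, Subtype.val_injective, Subtype.val_injective,
    fun _ => rfl, fun _ => rfl⟩

lemma mkSub_iso_of_graphEmb (h : GraphEmb H G) :
    ∃ (Vs : Set G.V) (Es : Set G.E)
      (hs : ∀ e ∈ Es, G.src e ∈ Vs) (ht : ∀ e ∈ Es, G.tgt e ∈ Vs),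
      IsIsomorphicTo H (mkSub G Vs Es hs ht) := by
  obtain ⟨fV, fE, hVi, hEi, hs, ht⟩ := h
  refine ⟨Set.range fV, Set.range fE, ?_, ?_, ?_⟩
  · rintro e ⟨e', rfl⟩; exact ⟨H.src e', (hs e').symm⟩
  · rintro e ⟨e', rfl⟩; exact ⟨H.tgt e', (ht e').symm⟩
  · refine iso_of_equiv (Equiv.ofInjective fV hVi) (Equiv.ofInjective fE hEi)
      (fun e => ?_) (fun e => ?_)
    · apply Subtype.ext
      change G.src (fE e) = fV (H.src e)
      exact hs e
    · apply Subtype.ext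
      change G.tgt (fE e) = fV (H.tgt e)
      exact ht e

end SubNetAux

theorem subCausalNet_characterizations (H G : CausalNet) :
    ((∃ (Vs : Set G.V) (Es : Set G.E)
        (hs : ∀ e ∈ Es, G.src e ∈ Vs) (ht : ∀ e ∈ Es, G.tgt e ∈ Vs),
        IsIsomorphicTo H (mkSub G Vs Es hs ht)) ↔
      (∃ φ : H ⟶ G, IsEmbedding φ)) ∧
    ((∃ φ : H ⟶ G, IsEmbedding φ) ↔ Relation.ReflTransGen SubNetStep G H) := by
  have hge1 : (∃ (Vs : Set G.V) (Es : Set G.E)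
      (hs : ∀ e ∈ Es, G.src e ∈ Vs) (ht : ∀ e ∈ Es, G.tgt e ∈ Vs),
      IsIsomorphicTo H (mkSub G Vs Es hs ht)) → GraphEmb H G := by
    rintro ⟨Vs, Es, hs, ht, φ, hiso⟩
    exact graphEmb_trans (graphEmb_of_embedding φ (embedding_of_isIso φ hiso))
      (graphEmb_mkSub G Vs Es hs ht)
  have hge2 : (∃ φ : H ⟶ G, IsEmbedding φ) → GraphEmb H G := by
    rintro ⟨φ, hφ⟩
    exact graphEmb_of_embedding φ hφ
  constructor
  · constructor
    · intro h
      exact exists_embedding_of_graphEmb (hge1 h)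
    · intro h
      exact mkSub_iso_of_graphEmb (hge2 h)
  · constructor
    · intro h
      exact steps_of_graphEmb _ G H le_rfl (hge2 h)
    · intro h
      exact exists_embedding_of_graphEmb (graphEmb_of_steps h)

end CausalNets
end
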